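/- Let X and Y be smooth vector fields on B with horizontal lifts X_H and Y_H on M, and let Z be a smooth vertical vector field on M. Then 2·⟪∇^M_{X_H} Y_H, Z⟫ = ⟪[X_H, Y_H], Z⟫ as functions on M. -/

import Mathlib

open Manifold

noncomputable section

/-- A vector field on a manifold is smooth if the corresponding section of the
tangent bundle is smooth. -/
def IsSmoothVF {E : Type*} [NormedAddCommGroup E] [NormedSpace ℝ E]
    {H : Type*} [TopologicalSpace H] (I : ModelWithCorners ℝ E H)
    {M : Type*} [TopologicalSpace M] [ChartedSpace H M] [IsManifold I ((⊤ : ℕ∞) : WithTop ℕ∞) M]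
    (X : ∀ m : M, TangentSpace I m) : Prop :=
  ContMDiff I I.tangent (⊤ : ℕ∞) (fun m => (⟨m, X m⟩ : TangentBundle I M))

/-- The action of a vector field on a function: `X(f)(m) := df_m(X_m)`. -/
def vfApply {E : Type*} [NormedAddCommGroup E] [NormedSpace ℝ E]
    {H : Type*} [TopologicalSpace H] (I : ModelWithCorners ℝ E H)
    {M : Type*} [TopologicalSpace M] [ChartedSpace H M]
    (X : ∀ m : M, TangentSpace I m) (f : M → ℝ) : M → ℝ :=
  fun m => mfderiv I 𝓘(ℝ, ℝ) f m (X m)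

/-- A Riemannian metric: a smoothly varying family of real inner products on the
tangent spaces. -/
structure RiemannianMetric {E : Type*} [NormedAddCommGroup E] [NormedSpace ℝ E]
    {H : Type*} [TopologicalSpace H] (I : ModelWithCorners ℝ E H)
    (M : Type*) [TopologicalSpace M] [ChartedSpace H M] [IsManifold I ((⊤ : ℕ∞) : WithTop ℕ∞) M] where
  g : ∀ m : M, TangentSpace I m → TangentSpace I m → ℝ
  symm : ∀ m u v, g m u v = g m v u
  add_left : ∀ m u v w, g m (u + v) w = g m u w + g m v w
  smul_left : ∀ (m) (c : ℝ) (u w), g m (c • u) w = c * g m u w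
  posdef : ∀ m v, v ≠ 0 → 0 < g m v v
  smooth : ∀ X Y : ∀ m : M, TangentSpace I m, IsSmoothVF I X → IsSmoothVF I Y →
    ContMDiff I 𝓘(ℝ, ℝ) (⊤ : ℕ∞) (fun m => g m (X m) (Y m))

/-- The Lie bracket of smooth vector fields, characterized by
`[X,Y](f) = X(Y(f)) - Y(X(f))` on smooth functions. -/
structure LieBracketData {E : Type*} [NormedAddCommGroup E] [NormedSpace ℝ E]
    {H : Type*} [TopologicalSpace H] (I : ModelWithCorners ℝ E H)
    (M : Type*) [TopologicalSpace M] [ChartedSpace H M] [IsManifold I ((⊤ : ℕ∞) : WithTop ℕ∞) M] where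
  bracket : (∀ m : M, TangentSpace I m) → (∀ m : M, TangentSpace I m) →
    (∀ m : M, TangentSpace I m)
  smooth : ∀ X Y, IsSmoothVF I X → IsSmoothVF I Y → IsSmoothVF I (bracket X Y)
  apply_eq : ∀ X Y, IsSmoothVF I X → IsSmoothVF I Y →
    ∀ f : M → ℝ, ContMDiff I 𝓘(ℝ, ℝ) (⊤ : ℕ∞) f → ∀ m,
      vfApply I (bracket X Y) f m =
        vfApply I X (vfApply I Y f) m - vfApply I Y (vfApply I X f) m

/-- The Levi-Civita connection associated to a Riemannian metric: an ℝ-bilinear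
operator on smooth vector fields, `C^∞`-linear in the first slot, satisfying the
Leibniz rule, metric, and torsion-free. -/
structure LeviCivita {E : Type*} [NormedAddCommGroup E] [NormedSpace ℝ E]
    {H : Type*} [TopologicalSpace H] {I : ModelWithCorners ℝ E H}
    {M : Type*} [TopologicalSpace M] [ChartedSpace H M] [IsManifold I ((⊤ : ℕ∞) : WithTop ℕ∞) M]
    (gM : RiemannianMetric I M) (lie : LieBracketData I M) where
  cov : (∀ m : M, TangentSpace I m) → (∀ m : M, TangentSpace I m) →
    (∀ m : M, TangentSpace I m)
  smooth : ∀ X Y, IsSmoothVF I X → IsSmoothVF I Y → IsSmoothVF I (cov X Y)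
  add_left : ∀ X X' Y, IsSmoothVF I X → IsSmoothVF I X' → IsSmoothVF I Y → ∀ m,
    cov (fun m => X m + X' m) Y m = cov X Y m + cov X' Y m
  add_right : ∀ X Y Y', IsSmoothVF I X → IsSmoothVF I Y → IsSmoothVF I Y' → ∀ m,
    cov X (fun m => Y m + Y' m) m = cov X Y m + cov X Y' m
  smul_left : ∀ (c : ℝ) (X Y), IsSmoothVF I X → IsSmoothVF I Y → ∀ m,
    cov (fun m => c • X m) Y m = c • cov X Y m
  smul_right : ∀ (c : ℝ) (X Y), IsSmoothVF I X → IsSmoothVF I Y → ∀ m,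
    cov X (fun m => c • Y m) m = c • cov X Y m
  cinf_linear : ∀ (f : M → ℝ), ContMDiff I 𝓘(ℝ, ℝ) (⊤ : ℕ∞) f →
    ∀ X Y, IsSmoothVF I X → IsSmoothVF I Y → ∀ m,
      cov (fun m => f m • X m) Y m = f m • cov X Y m
  leibniz : ∀ (f : M → ℝ), ContMDiff I 𝓘(ℝ, ℝ) (⊤ : ℕ∞) f →
    ∀ X Y, IsSmoothVF I X → IsSmoothVF I Y → ∀ m,
      cov X (fun m => f m • Y m) m = vfApply I X f m • Y m + f m • cov X Y m
  metric : ∀ X Y Z, IsSmoothVF I X → IsSmoothVF I Y → IsSmoothVF I Z → ∀ m,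
    vfApply I X (fun m => gM.g m (Y m) (Z m)) m =
      gM.g m (cov X Y m) (Z m) + gM.g m (Y m) (cov X Z m)
  torsion_free : ∀ X Y, IsSmoothVF I X → IsSmoothVF I Y → ∀ m,
    cov X Y m - cov Y X m = lie.bracket X Y m

section Submersion

variable {EM : Type*} [NormedAddCommGroup EM] [NormedSpace ℝ EM]
  {HM : Type*} [TopologicalSpace HM] (IM : ModelWithCorners ℝ EM HM)
  {M : Type*} [TopologicalSpace M] [ChartedSpace HM M]
  {EB : Type*} [NormedAddCommGroup EB] [NormedSpace ℝ EB]
  {HB : Type*} [TopologicalSpace HB] (IB : ModelWithCorners ℝ EB HB)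
  {B : Type*} [TopologicalSpace B] [ChartedSpace HB B]

/-- A vector field on `M` is vertical when `dπ_m(X_m) = 0` for all `m`. -/
def IsVerticalVF (π : M → B) (X : ∀ m : M, TangentSpace IM m) : Prop :=
  ∀ m : M, mfderiv IM IB π m (X m) = 0

section
variable [IsManifold IM ((⊤ : ℕ∞) : WithTop ℕ∞) M]

/-- A vector field on `M` is horizontal when it is pointwise `g`-orthogonal to the
kernel of `dπ`. -/
def IsHorizontalVF (π : M → B) (gM : RiemannianMetric IM M)
    (X : ∀ m : M, TangentSpace IM m) : Prop :=
  ∀ (m : M) (u : TangentSpace IM m), mfderiv IM IB π m u = 0 → gM.g m (X m) u = 0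

/-- `π : M → B` is a Riemannian submersion: it is smooth, surjective, each
differential `dπ_m` is surjective and restricts to a linear isometry from
`(ker dπ_m)^⊥` onto `T_{π m} B`. -/
structure IsRiemannianSubmersion [IsManifold IB ((⊤ : ℕ∞) : WithTop ℕ∞) B] (π : M → B)
    (gM : RiemannianMetric IM M) (gB : RiemannianMetric IB B) : Prop where
  smooth : ContMDiff IM IB (⊤ : ℕ∞) π
  surj : Function.Surjective π
  dsurj : ∀ m : M, Function.Surjective (mfderiv IM IB π m)
  isometry : ∀ (m : M) (v w : TangentSpace IM m),
    (∀ u : TangentSpace IM m, mfderiv IM IB π m u = 0 → gM.g m v u = 0) →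
    (∀ u : TangentSpace IM m, mfderiv IM IB π m u = 0 → gM.g m w u = 0) →
    gB.g (π m) (mfderiv IM IB π m v) (mfderiv IM IB π m w) = gM.g m v w

/-- `YH` is the horizontal lift of the vector field `Y` on `B`: it is smooth,
horizontal and satisfies `dπ_m((Y_H)_m) = Y_{π m}` for all `m`. -/
def IsHorizontalLift (π : M → B) (gM : RiemannianMetric IM M)
    (Y : ∀ b : B, TangentSpace IB b) (YH : ∀ m : M, TangentSpace IM m) : Prop :=
  IsSmoothVF IM YH ∧ IsHorizontalVF IM IB π gM YH ∧
    ∀ m : M, mfderiv IM IB π m (YH m) = Y (π m)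

end

end Submersion


section AuxLemmas

open Bundle

variable {E : Type*} [NormedAddCommGroup E] [NormedSpace ℝ E]
  {H : Type*} [TopologicalSpace H] {I : ModelWithCorners ℝ E H}
  {M : Type*} [TopologicalSpace M] [ChartedSpace H M] [IsManifold I ((⊤ : ℕ∞) : WithTop ℕ∞) M]

lemma vfApply_of_eq_zero (X : ∀ m : M, TangentSpace I m) {f : M → ℝ}
    (hf : ∀ m', f m' = 0) (m : M) : vfApply I X f m = 0 := by
  have hf' : f = fun _ => (0 : ℝ) := funext hf
  rw [vfApply, hf', mfderiv_const]
  rfl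

lemma g_add_right (gM : RiemannianMetric I M) (m : M) (u v w : TangentSpace I m) :
    gM.g m u (v + w) = gM.g m u v + gM.g m u w := by
  rw [gM.symm, gM.add_left, gM.symm m v u, gM.symm m w u]

lemma g_sub_left (gM : RiemannianMetric I M) (m : M) (u v w : TangentSpace I m) :
    gM.g m (u - v) w = gM.g m u w - gM.g m v w := by
  have h : u - v = u + (-1 : ℝ) • v := by
    rw [neg_one_smul]; abel
  rw [h, gM.add_left, gM.smul_left]; ring

/-- Separation of tangent vectors by smooth functions, via Whitney embedding. -/
lemma tangent_eq_zero_of_forall_mfderiv_eq_zero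
    [CompactSpace M] [T2Space M] [FiniteDimensional ℝ E] [I.Boundaryless]
    (b : M) (w : TangentSpace I b)
    (h : ∀ g : M → ℝ, ContMDiff I 𝓘(ℝ, ℝ) (⊤ : ℕ∞) g → mfderiv I 𝓘(ℝ, ℝ) g b w = 0) :
    w = 0 := by
  obtain ⟨n, e, he, -, hinj⟩ := exists_embedding_euclidean_of_compact (I := I) (M := M)
  have key : ∀ L : EuclideanSpace ℝ (Fin n) →L[ℝ] ℝ, L (mfderiv I (𝓡 n) e b w) = 0 := by
    intro L
    have hg : ContMDiff I 𝓘(ℝ, ℝ) (⊤ : ℕ∞) (L ∘ e) := L.contMDiff.comp he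
    have h2 := h _ hg
    rw [mfderiv_comp b ((L.contMDiff (n := 1)).mdifferentiableAt one_ne_zero)
        (he.mdifferentiableAt (by simp)), ContinuousLinearMap.mfderiv_eq] at h2
    exact h2
  have hvz : (show EuclideanSpace ℝ (Fin n) from mfderiv I (𝓡 n) e b w) = 0 := by
    have h3 := key (innerSL ℝ (show EuclideanSpace ℝ (Fin n) from mfderiv I (𝓡 n) e b w))
    simp only [innerSL_apply_apply] at h3
    exact inner_self_eq_zero.mp h3
  apply hinj b
  rw [(mfderiv I (𝓡 n) e b).map_zero]
  exact hvz

/-- The action of a smooth vector field on a smooth function is smooth. -/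
lemma contMDiff_vfApply {X : ∀ m : M, TangentSpace I m} (hX : IsSmoothVF I X)
    {g : M → ℝ} (hg : ContMDiff I 𝓘(ℝ, ℝ) (⊤ : ℕ∞) g) :
    ContMDiff I 𝓘(ℝ, ℝ) (⊤ : ℕ∞) (vfApply I X g) := by
  have hF : ContMDiff I 𝓘(ℝ, ℝ).tangent (⊤ : ℕ∞)
      (fun m => tangentMap I 𝓘(ℝ, ℝ) g ⟨m, X m⟩) :=
    (hg.contMDiff_tangentMap (m := (⊤ : ℕ∞)) (by rw [← WithTop.coe_one, ← WithTop.coe_add, top_add])).comp hX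
  have hF' : ContMDiff I (𝓘(ℝ, ℝ).prod 𝓘(ℝ, ℝ)) (⊤ : ℕ∞)
      (fun m => tangentMap I 𝓘(ℝ, ℝ) g ⟨m, X m⟩) := hF
  intro x₀
  have h2 := ((Bundle.contMDiffAt_totalSpace
      (f := fun m => tangentMap I 𝓘(ℝ, ℝ) g ⟨m, X m⟩) (x₀ := x₀)).mp (hF' x₀)).2
  have heq : (fun x => (trivializationAt ℝ (TangentSpace 𝓘(ℝ, ℝ))
      ((tangentMap I 𝓘(ℝ, ℝ) g ⟨x₀, X x₀⟩).proj)
      (tangentMap I 𝓘(ℝ, ℝ) g ⟨x, X x⟩)).2) = vfApply I X g := by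
    funext x
    simp only [TangentBundle.trivializationAt_apply, tangentMap, vfApply]
    norm_num [chartAt_self_eq]
    rfl
  rwa [heq] at h2

end AuxLemmas

section AuxSubmersion

variable {EM : Type*} [NormedAddCommGroup EM] [NormedSpace ℝ EM]
  {HM : Type*} [TopologicalSpace HM] {IM : ModelWithCorners ℝ EM HM}
  {M : Type*} [TopologicalSpace M] [ChartedSpace HM M] [IsManifold IM ((⊤ : ℕ∞) : WithTop ℕ∞) M]
  {EB : Type*} [NormedAddCommGroup EB] [NormedSpace ℝ EB]
  {HB : Type*} [TopologicalSpace HB] {IB : ModelWithCorners ℝ EB HB}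
  {B : Type*} [TopologicalSpace B] [ChartedSpace HB B] [IsManifold IB ((⊤ : ℕ∞) : WithTop ℕ∞) B]

/-- Chain rule along a smooth map, as a statement about `mfderiv` of the composite. -/
lemma mfderiv_comp_pi {π : M → B} (hπs : ContMDiff IM IB (⊤ : ℕ∞) π)
    {F : B → ℝ} (hF : ContMDiff IB 𝓘(ℝ, ℝ) (⊤ : ℕ∞) F) (m : M) (v : TangentSpace IM m) :
    mfderiv IM 𝓘(ℝ, ℝ) (F ∘ π) m v =
      mfderiv IB 𝓘(ℝ, ℝ) F (π m) (mfderiv IM IB π m v) := by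
  rw [mfderiv_comp m (hF.mdifferentiableAt (by simp)) (hπs.mdifferentiableAt (by simp))]
  rfl

/-- A vertical vector field annihilates functions pulled back from the base. -/
lemma vfApply_comp_vertical {π : M → B} (hπs : ContMDiff IM IB (⊤ : ℕ∞) π)
    {Z : ∀ m : M, TangentSpace IM m} (hZv : IsVerticalVF IM IB π Z)
    {F : B → ℝ} (hF : ContMDiff IB 𝓘(ℝ, ℝ) (⊤ : ℕ∞) F) (m : M) :
    vfApply IM Z (F ∘ π) m = 0 := by
  show mfderiv IM 𝓘(ℝ, ℝ) (F ∘ π) m (Z m) = 0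
  rw [mfderiv_comp_pi hπs hF m (Z m), hZv m,
    (mfderiv IB 𝓘(ℝ, ℝ) F (π m)).map_zero]

/-- The bracket of the horizontal lift of a vector field with a vertical vector field is
vertical. -/
lemma bracket_lift_vertical
    [CompactSpace B] [T2Space B] [FiniteDimensional ℝ EB] [IB.Boundaryless]
    {π : M → B} (hπs : ContMDiff IM IB (⊤ : ℕ∞) π)
    (lieM : LieBracketData IM M)
    {X : ∀ b : B, TangentSpace IB b} (hXs : IsSmoothVF IB X)
    {XH : ∀ m : M, TangentSpace IM m} (hXHs : IsSmoothVF IM XH)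
    (hXHl : ∀ m : M, mfderiv IM IB π m (XH m) = X (π m))
    {Z : ∀ m : M, TangentSpace IM m} (hZs : IsSmoothVF IM Z)
    (hZv : IsVerticalVF IM IB π Z) :
    IsVerticalVF IM IB π (lieM.bracket XH Z) := by
  intro m
  apply tangent_eq_zero_of_forall_mfderiv_eq_zero (π m)
  intro g hg
  have hgπ : ContMDiff IM 𝓘(ℝ, ℝ) (⊤ : ℕ∞) (g ∘ π) := hg.comp hπs
  have key := lieM.apply_eq XH Z hXHs hZs (g ∘ π) hgπ m
  have hZg : ∀ m', vfApply IM Z (g ∘ π) m' = 0 := fun m' =>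
    vfApply_comp_vertical hπs hZv hg m'
  have hXHg : vfApply IM XH (g ∘ π) = (vfApply IB X g) ∘ π := by
    funext m'
    show mfderiv IM 𝓘(ℝ, ℝ) (g ∘ π) m' (XH m') = vfApply IB X g (π m')
    rw [mfderiv_comp_pi hπs hg m' (XH m'), hXHl m']
    rfl
  have t1 : vfApply IM XH (vfApply IM Z (g ∘ π)) m = 0 :=
    vfApply_of_eq_zero _ hZg m
  have t2 : vfApply IM Z (vfApply IM XH (g ∘ π)) m = 0 := by
    rw [hXHg]
    exact vfApply_comp_vertical hπs hZv (contMDiff_vfApply hXs hg) m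
  have hmain : vfApply IM (lieM.bracket XH Z) (g ∘ π) m = 0 := by
    rw [key, t1, t2]; ring
  have hmain2 : mfderiv IM 𝓘(ℝ, ℝ) (g ∘ π) m (lieM.bracket XH Z m) = 0 := hmain
  rw [mfderiv_comp_pi hπs hg m (lieM.bracket XH Z m)] at hmain2
  exact hmain2

end AuxSubmersion

section Statement

variable {EM : Type*} [NormedAddCommGroup EM] [NormedSpace ℝ EM]
  {HM : Type*} [TopologicalSpace HM] {IM : ModelWithCorners ℝ EM HM}
  {M : Type*} [TopologicalSpace M] [ChartedSpace HM M] [IsManifold IM ((⊤ : ℕ∞) : WithTop ℕ∞) M]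
  {EB : Type*} [NormedAddCommGroup EB] [NormedSpace ℝ EB]
  {HB : Type*} [TopologicalSpace HB] {IB : ModelWithCorners ℝ EB HB}
  {B : Type*} [TopologicalSpace B] [ChartedSpace HB B] [IsManifold IB ((⊤ : ℕ∞) : WithTop ℕ∞) B]
  [IM.Boundaryless] [IB.Boundaryless] [CompactSpace M] [CompactSpace B]
  [T2Space M] [T2Space B] [FiniteDimensional ℝ EM] [FiniteDimensional ℝ EB]

/-- Let `X` and `Y` be smooth vector fields on `B` with horizontal lifts `X_H`, `Y_H`
on `M`, and let `Z` be a smooth vertical vector field on `M`. Then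
`2·⟪∇^M_{X_H} Y_H, Z⟫ = ⟪[X_H, Y_H], Z⟫` as functions on `M`. -/
theorem two_inner_levi_civita_horizontal_lifts_vertical
    (gM : RiemannianMetric IM M) (gB : RiemannianMetric IB B)
    (π : M → B) (hπ : IsRiemannianSubmersion IM IB π gM gB)
    (lieM : LieBracketData IM M) (lieB : LieBracketData IB B)
    (covM : LeviCivita gM lieM) (covB : LeviCivita gB lieB)
    (X : ∀ b : B, TangentSpace IB b) (hXsmooth : IsSmoothVF IB X)
    (Y : ∀ b : B, TangentSpace IB b) (hYsmooth : IsSmoothVF IB Y)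
    (XH : ∀ m : M, TangentSpace IM m) (hXH : IsHorizontalLift IM IB π gM X XH)
    (YH : ∀ m : M, TangentSpace IM m) (hYH : IsHorizontalLift IM IB π gM Y YH)
    (Z : ∀ m : M, TangentSpace IM m) (hZsmooth : IsSmoothVF IM Z)
    (hZvert : IsVerticalVF IM IB π Z) :
    ∀ m : M, 2 * gM.g m (covM.cov XH YH m) (Z m) =
      gM.g m (lieM.bracket XH YH m) (Z m) := by
  obtain ⟨hXHs, hXHh, hXHl⟩ := hXH
  obtain ⟨hYHs, hYHh, hYHl⟩ := hYH
  intro m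
  -- smoothness of the covariant derivatives involved
  have sXY := covM.smooth XH YH hXHs hYHs
  have sYX := covM.smooth YH XH hYHs hXHs
  have sXZ := covM.smooth XH Z hXHs hZsmooth
  have sYZ := covM.smooth YH Z hYHs hZsmooth
  have sZX := covM.smooth Z XH hZsmooth hXHs
  have sZY := covM.smooth Z YH hZsmooth hYHs
  -- the brackets with Z are vertical
  have hbXZ : IsVerticalVF IM IB π (lieM.bracket XH Z) :=
    bracket_lift_vertical hπ.smooth lieM hXsmooth hXHs hXHl hZsmooth hZvert
  have hbYZ : IsVerticalVF IM IB π (lieM.bracket YH Z) :=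
    bracket_lift_vertical hπ.smooth lieM hYsmooth hYHs hYHl hZsmooth hZvert
  -- E1 : 0 = ⟪∇_XH YH, Z⟫ + ⟪YH, ∇_XH Z⟫
  have e1 := covM.metric XH YH Z hXHs hYHs hZsmooth m
  rw [vfApply_of_eq_zero XH (fun m' => hYHh m' (Z m') (hZvert m')) m] at e1
  -- E2 : 0 = ⟪∇_YH XH, Z⟫ + ⟪XH, ∇_YH Z⟫
  have e2 := covM.metric YH XH Z hYHs hXHs hZsmooth m
  rw [vfApply_of_eq_zero YH (fun m' => hXHh m' (Z m') (hZvert m')) m] at e2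
  -- E5 : 0 = ⟪∇_Z XH, YH⟫ + ⟪XH, ∇_Z YH⟫
  have e5 := covM.metric Z XH YH hZsmooth hXHs hYHs m
  have hGfun : (fun m' => gM.g m' (XH m') (YH m')) =
      (fun b => gB.g b (X b) (Y b)) ∘ π := by
    funext m'
    have hiso := hπ.isometry m' (XH m') (YH m') (hXHh m') (hYHh m')
    rw [hXHl m', hYHl m'] at hiso
    exact hiso.symm
  rw [show vfApply IM Z (fun m' => gM.g m' (XH m') (YH m')) m = 0 by
    rw [hGfun]
    exact vfApply_comp_vertical hπ.smooth hZvert (gB.smooth X Y hXsmooth hYsmooth) m] at e5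
  -- E3 : ⟪YH, ∇_XH Z⟫ = ⟪YH, ∇_Z XH⟫
  have tXZ := covM.torsion_free XH Z hXHs hZsmooth m
  have e3 : gM.g m (YH m) (covM.cov XH Z m) = gM.g m (YH m) (covM.cov Z XH m) := by
    have h : covM.cov XH Z m = covM.cov Z XH m + lieM.bracket XH Z m := by
      rw [← tXZ]; abel
    rw [h, g_add_right, hYHh m (lieM.bracket XH Z m) (hbXZ m), add_zero]
  -- E4 : ⟪XH, ∇_YH Z⟫ = ⟪XH, ∇_Z YH⟫
  have tYZ := covM.torsion_free YH Z hYHs hZsmooth m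
  have e4 : gM.g m (XH m) (covM.cov YH Z m) = gM.g m (XH m) (covM.cov Z YH m) := by
    have h : covM.cov YH Z m = covM.cov Z YH m + lieM.bracket YH Z m := by
      rw [← tYZ]; abel
    rw [h, g_add_right, hXHh m (lieM.bracket YH Z m) (hbYZ m), add_zero]
  -- E6 : ⟪[XH,YH], Z⟫ = ⟪∇_XH YH, Z⟫ - ⟪∇_YH XH, Z⟫
  have tXY := covM.torsion_free XH YH hXHs hYHs m
  have e6 : gM.g m (lieM.bracket XH YH m) (Z m) =
      gM.g m (covM.cov XH YH m) (Z m) - gM.g m (covM.cov YH XH m) (Z m) := by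
    rw [← tXY, g_sub_left]
  -- symmetry facts to feed linarith
  have s1 : gM.g m (covM.cov Z XH m) (YH m) = gM.g m (YH m) (covM.cov Z XH m) :=
    gM.symm m _ _
  have s2 : gM.g m (XH m) (covM.cov Z YH m) = gM.g m (covM.cov Z YH m) (XH m) :=
    gM.symm m _ _
  have s3 : gM.g m (XH m) (covM.cov Z YH m) = gM.g m (XH m) (covM.cov Z YH m) := rfl
  linarith [e1, e2, e3, e4, e5, e6, s1, s2]

end Statement
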